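/- arXiv:1303.5591 — 2 statements merged into one kernel-verified Lean document; each statement's English description precedes it below -/
import Mathlib

section
/- Fix n ∈ ℕ, ε ∈ [0, 1/2], and 1 ≤ K ≤ 2^n. For every probability distribution P on {0,1}^n satisfying the Santha–Vazirani condition with parameter ε, the K-th Ky Fan norm of P is at most the K-th Ky Fan norm of the Bernoulli distribution B with parameter p₊ = 1/2 + ε: ‖P‖_K ≤ ‖B‖_K. -/
open Finset

/-- Hamming weight of a binary string. -/
def hammingWeight {n : ℕ} (x : Fin n → Bool) : ℕ :=
  (Finset.univ.filter (fun j => x j = true)).card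

/-- The Bernoulli distribution with parameter `p₊ = 1/2 + ε` on `{0,1}^n`:
`B(x) = (1/2+ε)^(n−w(x)) (1/2−ε)^(w(x))`. -/
noncomputable def bern (n : ℕ) (ε : ℝ) (x : Fin n → Bool) : ℝ :=
  (1/2 + ε) ^ (n - hammingWeight x) * (1/2 - ε) ^ (hammingWeight x)

/-- Marginal probability of a prefix `y` of length `i` under `P`. -/
noncomputable def prefMarg {n : ℕ} (P : (Fin n → Bool) → ℝ) {i : ℕ} (h : i ≤ n)
    (y : Fin i → Bool) : ℝ :=
  ∑ x ∈ Finset.univ.filter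
      (fun x : Fin n → Bool => ∀ j : Fin i, x (Fin.castLE h j) = y j), P x

/-- `P` is a probability distribution on `{0,1}^n` satisfying the Santha–Vazirani
condition with parameter `ε`: every conditional probability of the next bit given
a prefix of positive probability lies in `[1/2−ε, 1/2+ε]`. -/
noncomputable def IsSV (n : ℕ) (ε : ℝ) (P : (Fin n → Bool) → ℝ) : Prop :=
  (∀ x, 0 ≤ P x) ∧ (∑ x, P x = 1) ∧
  ∀ (i : ℕ) (hi : i < n) (y : Fin i → Bool),
    0 < prefMarg P hi.le y → ∀ b : Bool,
      1/2 - ε ≤ prefMarg P hi (Fin.snoc y b) / prefMarg P hi.le y ∧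
      prefMarg P hi (Fin.snoc y b) / prefMarg P hi.le y ≤ 1/2 + ε

/-- The set of SV distributions with parameter `ε` on `{0,1}^n`. -/
noncomputable def SVset (n : ℕ) (ε : ℝ) : Set ((Fin n → Bool) → ℝ) :=
  {P | IsSV n ε P}

/-- The `K`-th Ky Fan norm of `Q` : the sum of the `K` largest values of `Q`
(with multiplicity), i.e. the maximal sum of `Q` over subsets of cardinality `K`. -/
noncomputable def kyFan {Z : Type*} [Fintype Z] (K : ℕ) (Q : Z → ℝ) : ℝ :=
  sSup ((fun S : Finset Z => ∑ z ∈ S, Q z) '' {S : Finset Z | S.card = K})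

section SVaux

variable {n : ℕ} {ε : ℝ}

lemma bern_nonneg (hε0 : 0 ≤ ε) (hε : ε ≤ 1/2) (x : Fin n → Bool) :
    0 ≤ bern n ε x := by
  apply mul_nonneg <;> apply pow_nonneg <;> linarith

lemma card_fun_bool : Fintype.card (Fin n → Bool) = 2 ^ n := by
  simp [Fintype.card_fun]

lemma kyFan_bddAbove {Z : Type*} [Fintype Z] (K : ℕ) (Q : Z → ℝ) :
    BddAbove ((fun S : Finset Z => ∑ z ∈ S, Q z) '' {S : Finset Z | S.card = K}) :=
  (Set.toFinite _).bddAbove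

lemma sum_le_kyFan {Z : Type*} [Fintype Z] {K : ℕ} (Q : Z → ℝ) (S : Finset Z)
    (hS : S.card = K) : ∑ z ∈ S, Q z ≤ kyFan K Q :=
  le_csSup (kyFan_bddAbove K Q) ⟨S, hS, rfl⟩

lemma kyFan_exists {Z : Type*} [Fintype Z] (K : ℕ) (hK : K ≤ Fintype.card Z) (Q : Z → ℝ) :
    ∃ S : Finset Z, S.card = K ∧ kyFan K Q = ∑ z ∈ S, Q z := by
  have hne : ((fun S : Finset Z => ∑ z ∈ S, Q z) '' {S : Finset Z | S.card = K}).Nonempty := by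
    obtain ⟨t, _, ht⟩ := Finset.exists_subset_card_eq
      (show K ≤ (Finset.univ : Finset Z).card by simpa using hK)
    exact ⟨_, ⟨t, ht, rfl⟩⟩
  obtain ⟨S, hS, hSv⟩ := hne.csSup_mem (Set.toFinite _)
  exact ⟨S, hS, hSv.symm⟩

lemma kyFan_nonneg {Z : Type*} [Fintype Z] {K : ℕ} (hK : K ≤ Fintype.card Z) {Q : Z → ℝ}
    (hQ : ∀ z, 0 ≤ Q z) : 0 ≤ kyFan K Q := by
  obtain ⟨S, _, hv⟩ := kyFan_exists K hK Q
  rw [hv]; exact Finset.sum_nonneg fun z _ => hQ z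

lemma hammingWeight_le (x : Fin n → Bool) : hammingWeight x ≤ n := by
  refine le_trans (Finset.card_filter_le _ _) (by simp)

lemma hammingWeight_cons (b : Bool) (x : Fin n → Bool) :
    hammingWeight (Fin.cons b x) = (if b then 1 else 0) + hammingWeight x := by
  unfold hammingWeight
  rw [Finset.card_filter, Finset.card_filter, Fin.sum_univ_succ]
  simp [Fin.cons_succ]

lemma bern_cons_false (x : Fin n → Bool) :
    bern (n+1) ε (Fin.cons false x) = (1/2 + ε) * bern n ε x := by
  unfold bern
  rw [hammingWeight_cons]
  have h := hammingWeight_le x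
  norm_num
  rw [show n + 1 - hammingWeight x = (n - hammingWeight x) + 1 by omega, pow_succ]
  ring

lemma bern_cons_true (x : Fin n → Bool) :
    bern (n+1) ε (Fin.cons true x) = (1/2 - ε) * bern n ε x := by
  unfold bern
  rw [hammingWeight_cons]
  norm_num
  rw [show n + 1 - (1 + hammingWeight x) = n - hammingWeight x by omega, pow_add, pow_one]
  ring

/-- Non-dependent `Fin.cons`. -/
def consF {n : ℕ} (b : Bool) (x : Fin n → Bool) : Fin (n+1) → Bool := Fin.cons b x

lemma cons_injective (b : Bool) : Function.Injective (consF (n := n) b) := by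
  intro x y h
  have := congrArg Fin.tail h
  simp only [consF] at this
  simpa [Fin.tail_cons] using this

lemma kyFan_bern_rec (hε0 : 0 ≤ ε) (hε : ε ≤ 1/2)
    (a b : ℕ) (ha : a ≤ 2 ^ n) (hb : b ≤ 2 ^ n) :
    (1/2 + ε) * kyFan a (bern n ε) + (1/2 - ε) * kyFan b (bern n ε)
      ≤ kyFan (a + b) (bern (n+1) ε) := by
  clear hε0 hε
  obtain ⟨Sa, hSa, hva⟩ := kyFan_exists a (by rw [card_fun_bool]; exact ha) (bern n ε)
  obtain ⟨Sb, hSb, hvb⟩ := kyFan_exists b (by rw [card_fun_bool]; exact hb) (bern n ε)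
  have hdisj : Disjoint (Sa.image (consF false)) (Sb.image (consF true)) := by
    rw [Finset.disjoint_left]
    rintro z hz hz'
    obtain ⟨x, _, rfl⟩ := Finset.mem_image.1 hz
    obtain ⟨y, _, hy⟩ := Finset.mem_image.1 hz'
    have := congrFun hy 0
    simp [consF] at this
  have hcard : (Sa.image (consF false) ∪ Sb.image (consF true)).card = a + b := by
    rw [Finset.card_union_of_disjoint hdisj,
      Finset.card_image_of_injective _ (cons_injective false),
      Finset.card_image_of_injective _ (cons_injective true), hSa, hSb]
  have hsum : ∑ z ∈ Sa.image (consF false) ∪ Sb.image (consF true), bern (n+1) ε z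
      = (1/2 + ε) * ∑ x ∈ Sa, bern n ε x + (1/2 - ε) * ∑ x ∈ Sb, bern n ε x := by
    rw [Finset.sum_union hdisj,
      Finset.sum_image (fun x _ y _ h => cons_injective false h),
      Finset.sum_image (fun x _ y _ h => cons_injective true h)]
    simp only [consF, bern_cons_false, bern_cons_true, Finset.mul_sum]
  calc (1/2 + ε) * kyFan a (bern n ε) + (1/2 - ε) * kyFan b (bern n ε)
      = ∑ z ∈ Sa.image (consF false) ∪ Sb.image (consF true), bern (n+1) ε z := by
        rw [hsum, hva, hvb]
    _ ≤ kyFan (a + b) (bern (n+1) ε) := sum_le_kyFan _ _ hcard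

lemma castLE_succ {i n : ℕ} (h : i ≤ n) (j : Fin i) :
    Fin.castLE (Nat.succ_le_succ h) j.succ = (Fin.castLE h j).succ := rfl

lemma prefMarg_cons (P : (Fin (n+1) → Bool) → ℝ) {i : ℕ} (h : i ≤ n)
    (b : Bool) (y : Fin i → Bool) :
    prefMarg (fun x => P (consF b x)) h y
      = prefMarg P (Nat.succ_le_succ h) (Fin.cons b y) := by
  unfold prefMarg
  refine Finset.sum_nbij' (consF b) Fin.tail ?_ ?_ ?_ ?_ ?_
  · intro x hx
    simp only [Finset.mem_filter, Finset.mem_univ, true_and] at hx ⊢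
    intro j
    refine Fin.cases ?_ (fun j' => ?_) j
    · simp [consF, show Fin.castLE (Nat.succ_le_succ h) 0 = 0 from rfl]
    · rw [castLE_succ, consF]
      simp only [Fin.cons_succ]
      exact hx j'
  · intro z hz
    simp only [Finset.mem_filter, Finset.mem_univ, true_and] at hz ⊢
    intro j
    have := hz j.succ
    rw [castLE_succ] at this
    simpa [Fin.tail, Fin.cons_succ] using this
  · intro x _
    simp [consF, Fin.tail_cons]
  · intro z hz
    simp only [Finset.mem_filter, Finset.mem_univ, true_and] at hz
    have h0 := hz 0
    simp only [show Fin.castLE (Nat.succ_le_succ h) 0 = 0 from rfl, Fin.cons_zero] at h0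
    simp only [consF]
    rw [← h0, Fin.cons_self_tail]
  · intro x _
    rfl

/-- The ratio part of the SV condition (no normalization required). -/
def SVratio (n : ℕ) (ε : ℝ) (P : (Fin n → Bool) → ℝ) : Prop :=
  ∀ (i : ℕ) (hi : i < n) (y : Fin i → Bool),
    0 < prefMarg P hi.le y → ∀ b : Bool,
      1/2 - ε ≤ prefMarg P hi (Fin.snoc y b) / prefMarg P hi.le y ∧
      prefMarg P hi (Fin.snoc y b) / prefMarg P hi.le y ≤ 1/2 + ε

lemma SVratio_cons (P : (Fin (n+1) → Bool) → ℝ) (hSV : SVratio (n+1) ε P) (b : Bool) :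
    SVratio n ε (fun x => P (consF b x)) := by
  intro i hi y hpos c
  have h1 : prefMarg (fun x => P (consF b x)) hi.le y
      = prefMarg P (Nat.succ_le_succ hi.le) (Fin.cons b y) := prefMarg_cons P hi.le b y
  have h2 : prefMarg (fun x => P (consF b x)) hi (Fin.snoc y c)
      = prefMarg P (Nat.succ_le_succ hi) (Fin.cons b (Fin.snoc y c)) :=
    prefMarg_cons P hi b (Fin.snoc y c)
  rw [h1] at hpos
  have key := hSV (i+1) (Nat.succ_lt_succ hi) (Fin.cons b y) hpos c
  rw [h1, h2, Fin.cons_snoc_eq_snoc_cons]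
  exact key

lemma prefMarg_zero (P : (Fin n → Bool) → ℝ) (y : Fin 0 → Bool) :
    prefMarg P (Nat.zero_le n) y = ∑ x, P x := by
  unfold prefMarg
  rw [Finset.filter_true_of_mem (fun x _ => fun j => j.elim0)]

lemma snoc_zero_eq_cons (y : Fin 0 → Bool) (b : Bool) (z : Fin 0 → Bool) :
    (Fin.snoc y b : Fin 1 → Bool) = Fin.cons b z := by
  funext j
  have hj : j = Fin.last 0 := Fin.ext (by omega)
  rw [hj, Fin.snoc_last, show Fin.last 0 = (0 : Fin 1) from rfl, Fin.cons_zero]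

lemma sum_cons_split (P : (Fin (n+1) → Bool) → ℝ) (S : Finset (Fin (n+1) → Bool)) :
    ∃ S0 S1 : Finset (Fin n → Bool),
      S0.card + S1.card = S.card ∧
      (∑ x ∈ S, P x) = (∑ x ∈ S0, P (consF false x)) + (∑ x ∈ S1, P (consF true x)) := by
  set S0 := Finset.univ.filter (fun y => consF false y ∈ S) with hS0
  set S1 := Finset.univ.filter (fun y => consF true y ∈ S) with hS1
  have hdisj : Disjoint (S0.image (consF false)) (S1.image (consF true)) := by
    rw [Finset.disjoint_left]
    rintro z hz hz'
    obtain ⟨x, _, rfl⟩ := Finset.mem_image.1 hz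
    obtain ⟨w, _, hw⟩ := Finset.mem_image.1 hz'
    have := congrFun hw 0
    simp [consF] at this
  have hS : S = (S0.image (consF false)) ∪ (S1.image (consF true)) := by
    ext z
    simp only [hS0, hS1, Finset.mem_union, Finset.mem_image, Finset.mem_filter,
      Finset.mem_univ, true_and]
    constructor
    · intro hz
      cases hb : z 0 with
      | false =>
        left
        refine ⟨Fin.tail z, ?_, ?_⟩ <;>
          rw [show consF false (Fin.tail z) = z by rw [consF, ← hb, Fin.cons_self_tail]]
        exact hz
      | true =>
        right
        refine ⟨Fin.tail z, ?_, ?_⟩ <;>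
          rw [show consF true (Fin.tail z) = z by rw [consF, ← hb, Fin.cons_self_tail]]
        exact hz
    · rintro (⟨x, hx, rfl⟩ | ⟨x, hx, rfl⟩) <;> exact hx
  refine ⟨S0, S1, ?_, ?_⟩
  · conv_rhs => rw [hS]
    rw [Finset.card_union_of_disjoint hdisj,
      Finset.card_image_of_injective _ (cons_injective false),
      Finset.card_image_of_injective _ (cons_injective true)]
  · conv_lhs => rw [hS]
    rw [Finset.sum_union hdisj,
      Finset.sum_image (fun x _ y _ h => cons_injective false h),
      Finset.sum_image (fun x _ y _ h => cons_injective true h)]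

/-- The equivalence splitting off the first bit. -/
def consEquivF (n : ℕ) : Bool × (Fin n → Bool) ≃ (Fin (n+1) → Bool) where
  toFun := fun p => consF p.1 p.2
  invFun := fun z => (z 0, Fin.tail z)
  left_inv := fun p => by simp [consF]
  right_inv := fun z => by simp [consF, Fin.cons_self_tail]

lemma sum_split_total (P : (Fin (n+1) → Bool) → ℝ) :
    (∑ x, P x) = (∑ x, P (consF false x)) + (∑ x, P (consF true x)) := by
  calc (∑ x, P x) = ∑ p : Bool × (Fin n → Bool), P (consEquivF n p) :=
        (Equiv.sum_comp (consEquivF n) P).symm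
    _ = ∑ b : Bool, ∑ x : Fin n → Bool, P (consF b x) := by
        rw [Fintype.sum_prod_type]; rfl
    _ = _ := by rw [Fintype.sum_bool]; ring

lemma sv_core (hε0 : 0 ≤ ε) (hε : ε ≤ 1/2) :
    ∀ (n : ℕ) (P : (Fin n → Bool) → ℝ), (∀ x, 0 ≤ P x) → SVratio n ε P →
      ∀ S : Finset (Fin n → Bool),
        ∑ x ∈ S, P x ≤ (∑ x, P x) * kyFan S.card (bern n ε) := by
  intro n
  induction n with
  | zero =>
    intro P hP0 _ S
    rcases Finset.eq_empty_or_nonempty S with rfl | ⟨x, hx⟩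
    · have h0 : kyFan (0 : ℕ) (bern 0 ε) = 0 := by
        obtain ⟨T, hT, hv⟩ := kyFan_exists 0 (Nat.zero_le _) (bern 0 ε)
        rw [hv, Finset.card_eq_zero.1 hT, Finset.sum_empty]
      simp [h0]
    · have hSu : S = Finset.univ := by
        apply Finset.eq_univ_of_forall
        intro y
        have hyx : y = x := funext fun j => j.elim0
        rwa [hyx]
      subst hSu
      have hcard : (Finset.univ : Finset (Fin 0 → Bool)).card = 1 := by
        simp [Finset.card_univ, Fintype.card_fun]
      rw [hcard]
      have hb : bern 0 ε (fun j => j.elim0) = 1 := by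
        have hw : hammingWeight (fun j : Fin 0 => j.elim0) = 0 := by
          simp [hammingWeight]
        simp [bern, hw]
      have h1 : (1 : ℝ) ≤ kyFan 1 (bern 0 ε) := by
        have := sum_le_kyFan (bern 0 ε) {fun j => j.elim0} (Finset.card_singleton _)
        rw [Finset.sum_singleton, hb] at this
        exact this
      calc ∑ x, P x = (∑ x, P x) * 1 := by ring
        _ ≤ (∑ x, P x) * kyFan 1 (bern 0 ε) := by
            apply mul_le_mul_of_nonneg_left h1
            exact Finset.sum_nonneg fun z _ => hP0 z
  | succ n ih =>
    intro P hP0 hSV S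
    obtain ⟨S0, S1, hcard, hsplit⟩ := sum_cons_split P S
    have hTsplit := sum_split_total P
    have hT0nn : (0:ℝ) ≤ ∑ x, P (consF false x) :=
      Finset.sum_nonneg fun z _ => hP0 _
    have hT1nn : (0:ℝ) ≤ ∑ x, P (consF true x) :=
      Finset.sum_nonneg fun z _ => hP0 _
    have hTnn : (0:ℝ) ≤ ∑ x, P x := Finset.sum_nonneg fun z _ => hP0 _
    rcases eq_or_lt_of_le hTnn with hT0 | hTpos
    · -- total mass zero: P vanishes
      have hzero : ∀ x, P x = 0 := by
        intro x
        have := (Finset.sum_eq_zero_iff_of_nonneg (fun z _ => hP0 z)).1 hT0.symm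
        exact this x (Finset.mem_univ x)
      have hzS : ∑ x ∈ S, P x = 0 := Finset.sum_eq_zero fun z _ => hzero z
      rw [hzS, ← hT0, zero_mul]
    · -- positive total mass
      -- bounds on the two halves
      have hMb : ∀ b : Bool,
          prefMarg P (Nat.succ_le_succ (Nat.zero_le n)) (Fin.cons b (fun j => j.elim0))
            = ∑ x, P (consF b x) := by
        intro b
        rw [← prefMarg_cons (h := Nat.zero_le n), prefMarg_zero]
      have hbound : ∀ b : Bool, (∑ x, P (consF b x)) ≤ (1/2 + ε) * ∑ x, P x := by
        intro b
        have hpos : 0 < prefMarg P (Nat.le_of_lt (Nat.succ_pos n)) (fun j : Fin 0 => j.elim0) := by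
          rw [prefMarg_zero]; exact hTpos
        have hsv := (hSV 0 (Nat.succ_pos n) (fun j : Fin 0 => j.elim0) hpos b).2
        rw [snoc_zero_eq_cons (fun j : Fin 0 => j.elim0) b (fun j : Fin 0 => j.elim0)] at hsv
        rw [hMb b, prefMarg_zero] at hsv
        rw [div_le_iff₀ hTpos] at hsv
        linarith [hsv]
      -- apply the induction hypothesis to the two halves
      have ih0 := ih (fun x => P (consF false x)) (fun x => hP0 _)
        (SVratio_cons P hSV false) S0
      have ih1 := ih (fun x => P (consF true x)) (fun x => hP0 _)
        (SVratio_cons P hSV true) S1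
      have ha : S0.card ≤ 2 ^ n := by
        calc S0.card ≤ Fintype.card (Fin n → Bool) := Finset.card_le_univ S0
          _ = 2 ^ n := card_fun_bool
      have hb : S1.card ≤ 2 ^ n := by
        calc S1.card ≤ Fintype.card (Fin n → Bool) := Finset.card_le_univ S1
          _ = 2 ^ n := card_fun_bool
      have hAnn : 0 ≤ kyFan S0.card (bern n ε) :=
        kyFan_nonneg (by rw [card_fun_bool]; exact ha) (bern_nonneg hε0 hε)
      have hBnn : 0 ≤ kyFan S1.card (bern n ε) :=
        kyFan_nonneg (by rw [card_fun_bool]; exact hb) (bern_nonneg hε0 hε)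
      have hrec1 := kyFan_bern_rec hε0 hε S0.card S1.card ha hb
      have hrec2 := kyFan_bern_rec hε0 hε S1.card S0.card hb ha
      rw [Nat.add_comm S1.card S0.card] at hrec2
      rw [← hcard] at *
      rw [hsplit]
      set A := kyFan S0.card (bern n ε)
      set B := kyFan S1.card (bern n ε)
      set R := kyFan (S0.card + S1.card) (bern (n+1) ε)
      set T0 := ∑ x, P (consF false x)
      set T1 := ∑ x, P (consF true x)
      set T := ∑ x, P x
      have step1 : (∑ x ∈ S0, P (consF false x)) + (∑ x ∈ S1, P (consF true x))
          ≤ T0 * A + T1 * B := add_le_add ih0 ih1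
      refine le_trans step1 ?_
      rcases le_total A B with hAB | hAB
      · have key : T1 * (B - A) ≤ ((1/2 + ε) * T) * (B - A) :=
          mul_le_mul_of_nonneg_right (hbound true) (by linarith)
        have key2 : T * ((1/2 + ε) * B + (1/2 - ε) * A) ≤ T * R :=
          mul_le_mul_of_nonneg_left hrec2 hTnn
        nlinarith [key, key2, hTsplit]
      · have key : T0 * (A - B) ≤ ((1/2 + ε) * T) * (A - B) :=
          mul_le_mul_of_nonneg_right (hbound false) (by linarith)
        have key2 : T * ((1/2 + ε) * A + (1/2 - ε) * B) ≤ T * R :=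
          mul_le_mul_of_nonneg_left hrec1 hTnn
        nlinarith [key, key2, hTsplit]

end SVaux

/-- among SV distributions with parameter ε, the Bernoulli distribution
with parameter p₊ = 1/2 + ε maximizes every Ky Fan norm. -/
theorem sv_kyFan_le_bernoulli
    (n : ℕ) (ε : ℝ) (hε0 : 0 ≤ ε) (hε : ε ≤ 1/2)
    (K : ℕ) (hK1 : 1 ≤ K) (hK2 : K ≤ 2 ^ n)
    (P : (Fin n → Bool) → ℝ) (hP : IsSV n ε P) :
    kyFan K P ≤ kyFan K (bern n ε) := by
  obtain ⟨hP0, hPsum, hPsv⟩ := hP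
  have hne : ((fun S : Finset (Fin n → Bool) => ∑ z ∈ S, P z) ''
      {S : Finset (Fin n → Bool) | S.card = K}).Nonempty := by
    obtain ⟨t, _, ht⟩ := Finset.exists_subset_card_eq
      (show K ≤ (Finset.univ : Finset (Fin n → Bool)).card by
        simpa [Finset.card_univ, card_fun_bool] using hK2)
    exact ⟨_, ⟨t, ht, rfl⟩⟩
  apply csSup_le hne
  rintro r ⟨S, hS, rfl⟩
  have hcore := sv_core hε0 hε n P hP0 hPsv S
  rw [hPsum, hS, one_mul] at hcore
  exact hcore
end

section
/- Fix n ∈ ℕ, ε ∈ [0, 1/2), 1 ≤ K ≤ 2^n, and m < n. Write p₊ = 1/2 + ε, p₋ = 1/2 − ε, and α = (m/(n−m)) · (1+2ε)/(1−2ε), and suppose α < 1 and ∑_{i=0}^{m} C(n,i) ≥ K. Let B be the Bernoulli distribution with parameter p₊ on {0,1}^n. Then the K-th Ky Fan norm of B satisfies ‖B‖_K ≤ ∑_{i=0}^{m} C(n,i) p₋^{i} p₊^{n−i} ≤ (1/(1−α)) · C(n,m) p₋^{m} p₊^{n−m}. (In particular, with n = 2r and m = cr this gives the constant k = (2−c)(1−2ε)/(2(1−c−2ε))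 of Lemma 2 of the paper.) -/
open Finset

lemma hw_le {n : ℕ} (x : Fin n → Bool) : hammingWeight x ≤ n := by
  have := Finset.card_filter_le (univ : Finset (Fin n)) (fun j => x j = true)
  simpa [hammingWeight] using this

lemma card_hw_eq (n i : ℕ) :
    (univ.filter (fun x : Fin n → Bool => hammingWeight x = i)).card = n.choose i := by
  rw [show n.choose i = ((Finset.powersetCard i (univ : Finset (Fin n)))).card by
    rw [Finset.card_powersetCard, Finset.card_fin]]
  apply Finset.card_bij (fun x _ => univ.filter (fun j => x j = true))
  · intro x hx
    simp only [mem_filter, mem_univ, true_and] at hx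
    simpa [Finset.mem_powersetCard, hammingWeight] using hx
  · intro x hx y hy hxy
    funext j
    have := Finset.ext_iff.1 hxy j
    simp only [mem_filter, mem_univ, true_and] at this
    rcases Bool.dichotomy (x j) with h | h <;> rcases Bool.dichotomy (y j) with h' | h' <;>
      simp_all
  · intro s hs
    simp only [Finset.mem_powersetCard] at hs
    refine ⟨fun j => decide (j ∈ s), ?_, ?_⟩
    · rw [mem_filter]; refine ⟨mem_univ _, ?_⟩
      show (filter (fun j => decide (j ∈ s) = true) univ).card = i
      rw [show (filter (fun j => decide (j ∈ s) = true) univ) = s by ext j; simp, hs.2]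
    · ext j; simp

section
variable {n : ℕ} {ε : ℝ}

lemma pm_nonneg (hε : ε < 1/2) : (0:ℝ) ≤ 1/2 - ε := by linarith
lemma pp_pos (hε0 : 0 ≤ ε) : (0:ℝ) < 1/2 + ε := by linarith

lemma bern_anti (hε0 : 0 ≤ ε) (hε : ε < 1/2) {a b : ℕ} (hab : a ≤ b) (hb : b ≤ n) :
    (1/2 + ε) ^ (n - b) * (1/2 - ε) ^ b ≤ (1/2 + ε) ^ (n - a) * (1/2 - ε) ^ a := by
  have h1 : n - a = (n - b) + (b - a) := by omega
  rw [h1, pow_add,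
    show (1/2 - ε) ^ b = (1/2 - ε) ^ a * (1/2 - ε) ^ (b - a) by
      rw [← pow_add]; congr 1; omega]
  have hpm : (0:ℝ) ≤ 1/2 - ε := by linarith
  have hpp : (0:ℝ) ≤ 1/2 + ε := by linarith
  have key : (1/2 - ε) ^ (b - a) ≤ (1/2 + ε) ^ (b - a) :=
    pow_le_pow_left₀ hpm (by linarith) _
  calc (1/2 + ε) ^ (n - b) * ((1/2 - ε) ^ a * (1/2 - ε) ^ (b - a))
      = (1/2 + ε) ^ (n - b) * (1/2 - ε) ^ a * (1/2 - ε) ^ (b - a) := by ring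
    _ ≤ (1/2 + ε) ^ (n - b) * (1/2 - ε) ^ a * (1/2 + ε) ^ (b - a) :=
        mul_le_mul_of_nonneg_left key (by positivity)
    _ = (1/2 + ε) ^ (n - b) * (1/2 + ε) ^ (b - a) * (1/2 - ε) ^ a := by ring

lemma bern_eq_of_hw {x : Fin n → Bool} {i : ℕ} (h : hammingWeight x = i) :
    bern n ε x = (1/2 + ε) ^ (n - i) * (1/2 - ε) ^ i := by
  simp [bern, h]

lemma sum_bern_low (n : ℕ) (ε : ℝ) (m : ℕ) :
    ∑ x ∈ univ.filter (fun x : Fin n → Bool => hammingWeight x ≤ m), bern n ε x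
      = ∑ i ∈ Finset.range (m + 1), (n.choose i : ℝ) * (1/2 - ε) ^ i * (1/2 + ε) ^ (n - i) := by
  rw [← Finset.sum_fiberwise_of_maps_to (g := hammingWeight)
    (t := Finset.range (m+1)) (fun x hx => by
      simp only [mem_filter] at hx; simp [Nat.lt_succ_iff, hx.2])]
  refine Finset.sum_congr rfl fun i hi => ?_
  simp only [Finset.mem_range, Nat.lt_succ_iff] at hi
  have hfil : ((univ.filter (fun x : Fin n → Bool => hammingWeight x ≤ m)).filter
      (fun x => hammingWeight x = i)) = univ.filter (fun x => hammingWeight x = i) := by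
    rw [Finset.filter_filter]
    exact Finset.filter_congr (fun x _ => by constructor <;> (intro h; omega))
  rw [hfil, Finset.sum_congr rfl (fun x hx => bern_eq_of_hw (by
      simpa using (Finset.mem_filter.1 hx).2)), Finset.sum_const, card_hw_eq]
  ring

lemma card_low (n m : ℕ) :
    (univ.filter (fun x : Fin n → Bool => hammingWeight x ≤ m)).card
      = ∑ i ∈ Finset.range (m + 1), n.choose i := by
  rw [Finset.card_eq_sum_card_fiberwise (f := hammingWeight) (t := Finset.range (m+1))
    (fun x hx => by simp only [mem_coe, mem_filter] at hx; simp [Nat.lt_succ_iff, hx.2])]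
  refine Finset.sum_congr rfl fun i hi => ?_
  simp only [Finset.mem_range, Nat.lt_succ_iff] at hi
  rw [Finset.filter_filter,
    Finset.filter_congr (fun x (_ : x ∈ univ) => by constructor <;> (intro h; omega) :
      ∀ x ∈ univ, (hammingWeight x ≤ m ∧ hammingWeight x = i) ↔ hammingWeight x = i),
    card_hw_eq]

end

/-- upper bound on the K-th Ky Fan norm of the Bernoulli distribution
via a geometric series, when α = (m/(n−m))·(1+2ε)/(1−2ε) < 1 and
∑_{i=0}^m C(n,i) ≥ K. -/
theorem kyFan_bernoulli_upper_bound
    (n : ℕ) (ε : ℝ) (hε0 : 0 ≤ ε) (hε : ε < 1/2)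
    (K : ℕ) (hK1 : 1 ≤ K) (hK2 : K ≤ 2 ^ n) (m : ℕ) (hmn : m < n)
    (hα : ((m : ℝ) / ((n : ℝ) - (m : ℝ))) * (1 + 2 * ε) / (1 - 2 * ε) < 1)
    (hsum : K ≤ ∑ i ∈ Finset.range (m + 1), n.choose i) :
    kyFan K (bern n ε) ≤
      (∑ i ∈ Finset.range (m + 1),
        (n.choose i : ℝ) * (1/2 - ε) ^ i * (1/2 + ε) ^ (n - i)) ∧
    (∑ i ∈ Finset.range (m + 1),
        (n.choose i : ℝ) * (1/2 - ε) ^ i * (1/2 + ε) ^ (n - i)) ≤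
      (1 / (1 - ((m : ℝ) / ((n : ℝ) - (m : ℝ))) * (1 + 2 * ε) / (1 - 2 * ε))) *
        ((n.choose m : ℝ) * (1/2 - ε) ^ m * (1/2 + ε) ^ (n - m)) := by
  have hpm : (0:ℝ) ≤ 1/2 - ε := by linarith
  have hpp : (0:ℝ) < 1/2 + ε := by linarith
  have hnm : (0:ℝ) < (n:ℝ) - (m:ℝ) := by
    have : (m:ℝ) < (n:ℝ) := by exact_mod_cast hmn
    linarith
  set α : ℝ := ((m : ℝ) / ((n : ℝ) - (m : ℝ))) * (1 + 2 * ε) / (1 - 2 * ε) with hαdef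
  have hα0 : 0 ≤ α := by
    apply div_nonneg (mul_nonneg (div_nonneg (by positivity) hnm.le) (by linarith)) (by linarith)
  set t : ℕ → ℝ := fun i => (n.choose i : ℝ) * (1/2 - ε) ^ i * (1/2 + ε) ^ (n - i) with ht
  have ht_nonneg : ∀ i, 0 ≤ t i := fun i => by
    apply mul_nonneg (mul_nonneg (by positivity) (by positivity)) (by positivity)
  constructor
  · -- Part 1
    have hS_nonneg : (0:ℝ) ≤ ∑ i ∈ Finset.range (m + 1), t i :=
      Finset.sum_nonneg fun i _ => ht_nonneg i
    apply Real.sSup_le _ hS_nonneg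
    rintro y ⟨S, hS, rfl⟩
    simp only [Set.mem_setOf_eq] at hS
    set T := univ.filter (fun x : Fin n → Bool => hammingWeight x ≤ m) with hT
    set c : ℝ := (1/2 + ε) ^ (n - (m+1)) * (1/2 - ε) ^ (m+1) with hc
    have hc0 : 0 ≤ c := by positivity
    have h1 : ∀ x ∈ S \ T, bern n ε x ≤ c := by
      intro x hx
      have hxT : ¬ hammingWeight x ≤ m := by
        have := (Finset.mem_sdiff.1 hx).2
        simpa [hT] using this
      exact bern_anti hε0 hε (by omega) (hw_le x)
    have h2 : ∀ y ∈ T \ S, c ≤ bern n ε y := by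
      intro y hy
      have hyT : hammingWeight y ≤ m := by
        have := (Finset.mem_sdiff.1 hy).1
        simpa [hT] using this
      exact bern_anti hε0 hε (by omega) (by omega)
    have hTcard : T.card = ∑ i ∈ Finset.range (m + 1), n.choose i := card_low n m
    have hcard : (S \ T).card ≤ (T \ S).card := by
      have e1 := Finset.card_sdiff_add_card_inter S T
      have e2 := Finset.card_sdiff_add_card_inter T S
      rw [Finset.inter_comm T S] at e2
      omega
    have key : ∑ x ∈ S \ T, bern n ε x ≤ ∑ y ∈ T \ S, bern n ε y := by
      calc ∑ x ∈ S \ T, bern n ε x ≤ (S \ T).card • c := Finset.sum_le_card_nsmul _ _ _ h1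
        _ = ((S \ T).card : ℝ) * c := nsmul_eq_mul _ _
        _ ≤ ((T \ S).card : ℝ) * c := by
            apply mul_le_mul_of_nonneg_right _ hc0
            exact_mod_cast hcard
        _ = (T \ S).card • c := (nsmul_eq_mul _ _).symm
        _ ≤ ∑ y ∈ T \ S, bern n ε y := Finset.card_nsmul_le_sum _ _ _ h2
    have hsplit : ∑ x ∈ S, bern n ε x ≤ ∑ x ∈ T, bern n ε x := by
      rw [← Finset.sum_inter_add_sum_sdiff S T (bern n ε),
        ← Finset.sum_inter_add_sum_sdiff T S (bern n ε), Finset.inter_comm T S]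
      linarith
    calc ∑ x ∈ S, bern n ε x ≤ ∑ x ∈ T, bern n ε x := hsplit
      _ = ∑ i ∈ Finset.range (m + 1), t i := sum_bern_low n ε m
  · -- Part 2
    have step : ∀ i, 1 ≤ i → i ≤ m → t (i - 1) ≤ α * t i := by
      intro i hi1 him
      have hin : i ≤ n := by omega
      have hnat : n.choose (i-1) * (n - m) ≤ n.choose i * m := by
        have hid := Nat.choose_succ_right_eq n (i - 1)
        rw [show i - 1 + 1 = i by omega] at hid
        calc n.choose (i-1) * (n - m) ≤ n.choose (i-1) * (n - (i-1)) :=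
              Nat.mul_le_mul_left _ (by omega)
          _ = n.choose i * i := hid.symm
          _ ≤ n.choose i * m := Nat.mul_le_mul_left _ him
      have hCC : (n.choose (i-1) : ℝ) ≤ (m:ℝ) / ((n:ℝ) - (m:ℝ)) * (n.choose i) := by
        rw [div_mul_eq_mul_div, le_div_iff₀ hnm]
        have : ((n.choose (i-1) * (n - m) : ℕ) : ℝ) ≤ ((n.choose i * m : ℕ) : ℝ) := by
          exact_mod_cast hnat
        push_cast [Nat.cast_sub hmn.le] at this
        linarith
      have hαp : α * (1/2 - ε) = (m:ℝ) / ((n:ℝ) - (m:ℝ)) * (1/2 + ε) := by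
        have h2e : (1:ℝ) - 2*ε ≠ 0 := by intro h; rw [sub_eq_zero] at h; linarith
        have hnm' : ((n:ℝ) - (m:ℝ)) ≠ 0 := ne_of_gt hnm
        rw [hαdef]
        field_simp
      have hfac : (n.choose (i-1) : ℝ) * (1/2 + ε) ≤ α * ((n.choose i : ℝ) * (1/2 - ε)) := by
        calc (n.choose (i-1) : ℝ) * (1/2 + ε)
            ≤ ((m:ℝ) / ((n:ℝ) - (m:ℝ)) * (n.choose i)) * (1/2 + ε) :=
              mul_le_mul_of_nonneg_right hCC hpp.le
          _ = (n.choose i : ℝ) * ((m:ℝ) / ((n:ℝ) - (m:ℝ)) * (1/2 + ε)) := by ring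
          _ = (n.choose i : ℝ) * (α * (1/2 - ε)) := by rw [hαp]
          _ = α * ((n.choose i : ℝ) * (1/2 - ε)) := by ring
      have hexp1 : n - (i - 1) = (n - i) + 1 := by omega
      have hexp2 : (1/2 - ε) ^ i = (1/2 - ε) ^ (i-1) * (1/2 - ε) := by
        rw [← pow_succ]; congr 1; omega
      rw [ht]
      simp only
      rw [hexp1, hexp2, pow_succ]
      calc (n.choose (i-1) : ℝ) * (1/2 - ε) ^ (i-1) * ((1/2 + ε) ^ (n-i) * (1/2 + ε))
          = ((n.choose (i-1) : ℝ) * (1/2 + ε)) * ((1/2 - ε) ^ (i-1) * (1/2 + ε) ^ (n-i)) := by ring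
        _ ≤ (α * ((n.choose i : ℝ) * (1/2 - ε))) * ((1/2 - ε) ^ (i-1) * (1/2 + ε) ^ (n-i)) :=
            mul_le_mul_of_nonneg_right hfac (by positivity)
        _ = α * ((n.choose i : ℝ) * ((1/2 - ε) ^ (i-1) * (1/2 - ε)) * (1/2 + ε) ^ (n-i)) := by ring
    have hiter : ∀ j, j ≤ m → t (m - j) ≤ α ^ j * t m := by
      intro j
      induction j with
      | zero => simp
      | succ j ih =>
        intro hj
        have h1 : t (m - (j+1)) ≤ α * t (m - j) := by
          have := step (m - j) (by omega) (by omega)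
          rwa [show m - j - 1 = m - (j+1) by omega] at this
        calc t (m - (j+1)) ≤ α * t (m - j) := h1
          _ ≤ α * (α ^ j * t m) := mul_le_mul_of_nonneg_left (ih (by omega)) hα0
          _ = α ^ (j+1) * t m := by ring
    have hgeom : ∑ j ∈ Finset.range (m+1), α ^ j ≤ 1 / (1 - α) := by
      rw [le_div_iff₀ (by linarith)]
      have g := geom_sum_mul α (m+1)
      have : (∑ j ∈ Finset.range (m+1), α ^ j) * (1 - α) = 1 - α ^ (m+1) := by
        have := g
        nlinarith [g]
      rw [this]
      have : 0 ≤ α ^ (m+1) := pow_nonneg hα0 _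
      linarith
    calc ∑ i ∈ Finset.range (m + 1), t i
        = ∑ j ∈ Finset.range (m + 1), t (m - j) := (Finset.sum_range_reflect t (m+1)).symm
      _ ≤ ∑ j ∈ Finset.range (m + 1), α ^ j * t m :=
          Finset.sum_le_sum fun j hj => hiter j (by simpa [Nat.lt_succ_iff] using hj)
      _ = (∑ j ∈ Finset.range (m + 1), α ^ j) * t m := by rw [Finset.sum_mul]
      _ ≤ (1 / (1 - α)) * t m := mul_le_mul_of_nonneg_right hgeom (ht_nonneg m)
end
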